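/- arXiv:2109.14082 — 3 statements merged into one kernel-verified Lean document; each statement's English description precedes it below -/
import Mathlib

section
/- Suppose a warning function w has the following form: with probability γ it outputs φ(R), where R is the number of calibration scores exceeding the test score and φ: {0,...,T} → {0,1} is deterministic, and with probability 1-γ it outputs 1 (a warning). Assume R is uniformly distributed on {0,1,...,T} when the test point is unsafe. If the false negative rate P(w outputs 0 | unsafe) is at most ε, and φ outputs 0 on at least one input, and the false positive rate satisfies FPR ≥ 1-γ, then FPR ≥ 1 - (1+T)ε. -/
open Finset

/-- Proposition 2 (core step): for a rank-based warning rule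
`w = φ(R)` with probability `γ`, `1` with probability `1-γ`, where `R` is
uniform on `{0,...,T}` under unsafety (so the false negative rate equals
`γ · #{r : φ r = 0} / (T+1)`): if the FNR is at most `ε`, `φ` outputs `0`
on at least one input, and `FPR ≥ 1 - γ`, then `FPR ≥ 1 - (1+T)ε`. -/
theorem stmt_3 (T : ℕ) (γ ε FNR FPR : ℝ)
    (hγ : γ ∈ Set.Icc (0:ℝ) 1)
    (φ : Fin (T + 1) → Bool)
    (hFNR : FNR = γ * ((Finset.univ.filter (fun r : Fin (T + 1) => φ r = false)).card : ℝ) / (T + 1))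
    (hFNRε : FNR ≤ ε)
    (hφ : ∃ r, φ r = false)
    (hFPR : FPR ≥ 1 - γ) :
    FPR ≥ 1 - (1 + T) * ε := by
  obtain ⟨r, hr⟩ := hφ
  have hcard : (1:ℝ) ≤ ((Finset.univ.filter (fun r : Fin (T + 1) => φ r = false)).card : ℝ) := by
    have : 0 < (Finset.univ.filter (fun r : Fin (T + 1) => φ r = false)).card :=
      Finset.card_pos.mpr ⟨r, by simp [hr]⟩
    exact_mod_cast this
  have hT : (0:ℝ) < (T:ℝ) + 1 := by positivity
  have h1 : γ / ((T:ℝ) + 1) ≤ FNR := by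
    rw [hFNR]
    gcongr

    nlinarith [hγ.1]
  have h2 : γ ≤ ((T:ℝ) + 1) * ε := by
    have := h1.trans hFNRε
    rw [div_le_iff₀ hT] at this
    linarith
  nlinarith
end

section
/- Let T be a positive integer and ε > 0 with ε < 1/(1+T). Then for any rank-based warning rule of the form in Proposition 2 (randomized mixture with weight γ of a deterministic function of the uniform rank on {0,...,T}, and weight 1-γ of always warning) whose false negative rate is at most ε, the false positive rate is at least 1 - (1+T)ε > 0; in particular if ε = o(1/T) then FPR → 1 as T → ∞. -/
open Finset

/-- Proposition 2: for any rank-based warning rule (output `φ(R)` with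
probability `γ`, where `R` is uniform on `{0,...,T}` for unsafe points, and
output a warning with probability `1-γ`; with `FPR ≥ 1-γ` whenever `φ` is not
identically `1`, and `FPR = 1` if `φ ≡ 1`), if the false negative rate is at
most `ε < 1/(1+T)`, then `FPR ≥ 1 - (1+T)ε > 0`. -/
theorem stmt_4 (T : ℕ) (hT : 0 < T) (ε : ℝ) (hε0 : 0 < ε) (hε : ε < 1 / (1 + (T : ℝ)))
    (γ FNR FPR : ℝ)
    (hγ : γ ∈ Set.Icc (0:ℝ) 1)
    (φ : Fin (T + 1) → Bool)
    (hFNR : FNR = γ * ((Finset.univ.filter (fun r : Fin (T + 1) => φ r = false)).card : ℝ) / (T + 1))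
    (hFNRε : FNR ≤ ε)
    (hFPR₁ : (∃ r, φ r = false) → FPR ≥ 1 - γ)
    (hFPR₂ : (∀ r, φ r = true) → FPR = 1) :
    FPR ≥ 1 - (1 + (T : ℝ)) * ε ∧ 0 < 1 - (1 + (T : ℝ)) * ε := by
  have hT1 : (0:ℝ) < 1 + (T:ℝ) := by positivity
  have hpos : 0 < 1 - (1 + (T : ℝ)) * ε := by
    have := (lt_div_iff₀ hT1).mp hε
    nlinarith
  refine ⟨?_, hpos⟩
  by_cases h : ∀ r, φ r = true
  · rw [hFPR₂ h]; nlinarith [mul_pos hT1 hε0]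
  · push_neg at h
    obtain ⟨r, hr⟩ := h
    have hr' : φ r = false := by simpa using hr
    have hcard : 1 ≤ ((Finset.univ.filter (fun r : Fin (T + 1) => φ r = false)).card : ℝ) := by
      have : 0 < (Finset.univ.filter (fun r : Fin (T + 1) => φ r = false)).card := by
        apply Finset.card_pos.mpr
        exact ⟨r, by simp [hr']⟩
      exact_mod_cast this
    have hγle : γ ≤ (1 + (T:ℝ)) * ε := by
      have hF : γ * 1 / ((T:ℝ) + 1) ≤ FNR := by
        rw [hFNR]
        apply div_le_div_of_nonneg_right _ (by positivity)
        exact mul_le_mul_of_nonneg_left hcard hγ.1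
      have : γ / ((T:ℝ)+1) ≤ ε := by simpa using hF.trans hFNRε
      have := (div_le_iff₀ (by positivity : (0:ℝ) < (T:ℝ)+1)).mp this
      nlinarith
    have := hFPR₁ ⟨r, hr'⟩
    linarith
end

section
/- Let X₁,...,X_{M+1} be exchangeable real-valued random variables (ties allowed). Let N = #{i ≤ M : X_i < X_{M+1}} and let U be, conditionally on the values, uniform on {0,1,...,#{i ≤ M : X_i = X_{M+1}}}. Then N + U is uniformly distributed on {0,1,...,M}. -/
open MeasureTheory Finset
open scoped ENNReal

namespace Stmt14Aux
variable {M : ℕ}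

noncomputable def aCnt (x : Fin (M+1) → ℝ) (v : ℝ) : ℕ := #(Finset.univ.filter (fun i => x i < v))
noncomputable def eCnt (x : Fin (M+1) → ℝ) (v : ℝ) : ℕ := #(Finset.univ.filter (fun i => x i = v))
noncomputable def leCnt (x : Fin (M+1) → ℝ) (v : ℝ) : ℕ := #(Finset.univ.filter (fun i => x i ≤ v))

lemma aCnt_add_eCnt (x : Fin (M+1) → ℝ) (v : ℝ) : aCnt x v + eCnt x v = leCnt x v := by
  rw [aCnt, eCnt, leCnt, ← Finset.card_union_of_disjoint]
  · congr 1
    ext i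
    simp only [mem_union, mem_filter, mem_univ, true_and]
    constructor
    · rintro (h | h) <;> simp [le_of_lt, h, le_of_eq]
    · exact fun h => h.lt_or_eq
  · rw [Finset.disjoint_left]
    intro i hi hi'
    simp only [mem_filter, mem_univ, true_and] at hi hi'
    exact absurd hi' (ne_of_lt hi)

lemma card_filter_comp_perm {ι : Type*} [Fintype ι] [DecidableEq ι] (e : Equiv.Perm ι)
    (p : ι → Prop) [DecidablePred p] :
    #(Finset.univ.filter (fun i => p (e i))) = #(Finset.univ.filter p) := by
  refine Finset.card_bij (fun i _ => e i) ?_ ?_ ?_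
  · intro a ha; simp only [mem_filter, mem_univ, true_and] at ha ⊢; exact ha
  · intro a _ b _ h; exact e.injective h
  · intro b hb; exact ⟨e.symm b, by simpa using (by simpa using hb : p b), by simp⟩

lemma card_filter_castSucc (p : Fin (M+1) → Prop) [DecidablePred p] :
    #(Finset.univ.filter (fun i : Fin M => p i.castSucc))
      = #(Finset.univ.filter (fun i : Fin (M+1) => p i ∧ i ≠ Fin.last M)) := by
  refine Finset.card_bij (fun i _ => i.castSucc) ?_ ?_ ?_
  · intro a ha
    simp only [mem_filter, mem_univ, true_and] at ha ⊢
    exact ⟨ha, Fin.ne_of_lt (Fin.castSucc_lt_last a)⟩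
  · intro a _ b _ h; exact Fin.castSucc_injective _ h
  · intro b hb
    simp only [mem_filter, mem_univ, true_and] at hb
    obtain ⟨j, rfl⟩ := Fin.exists_castSucc_eq.mpr hb.2
    exact ⟨j, by simp [hb.1]⟩

lemma aux_exists (x : Fin (M+1) → ℝ) (r : ℕ) (hr : r ≤ M) :
    ∃ j : Fin (M+1), aCnt x (x j) ≤ r ∧ r < aCnt x (x j) + eCnt x (x j) := by
  set σ := Tuple.sort x with hσ
  have mono := Tuple.monotone_sort x
  set r' : Fin (M+1) := ⟨r, by omega⟩ with hr'
  refine ⟨σ r', ?_, ?_⟩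
  · have h1 : aCnt x (x (σ r')) = #(Finset.univ.filter (fun i => x (σ i) < x (σ r'))) :=
      (card_filter_comp_perm σ _).symm
    have h2 : (Finset.univ.filter (fun i => x (σ i) < x (σ r'))) ⊆
        (Finset.univ.filter (fun i : Fin (M+1) => i < r')) := by
      intro i hi
      simp only [mem_filter, mem_univ, true_and] at hi ⊢
      by_contra h
      exact absurd (mono (le_of_not_gt h)) (not_le.mpr hi)
    have h3 : #(Finset.univ.filter (fun i : Fin (M+1) => i < r')) = r := by
      have : Finset.univ.filter (fun i : Fin (M+1) => i < r') = Finset.Iio r' := by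
        ext i; simp
      rw [this, Fin.card_Iio]
    calc aCnt x (x (σ r')) ≤ #(Finset.univ.filter (fun i : Fin (M+1) => i < r')) := by
          rw [h1]; exact Finset.card_le_card h2
      _ = r := h3
  · rw [aCnt_add_eCnt]
    have h1 : leCnt x (x (σ r')) = #(Finset.univ.filter (fun i => x (σ i) ≤ x (σ r'))) :=
      (card_filter_comp_perm σ _).symm
    have h2 : (Finset.univ.filter (fun i : Fin (M+1) => i ≤ r')) ⊆
        (Finset.univ.filter (fun i => x (σ i) ≤ x (σ r'))) := by
      intro i hi
      simp only [mem_filter, mem_univ, true_and] at hi ⊢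
      exact mono hi
    have h3 : #(Finset.univ.filter (fun i : Fin (M+1) => i ≤ r')) = r + 1 := by
      have : Finset.univ.filter (fun i : Fin (M+1) => i ≤ r') = Finset.Iic r' := by
        ext i; simp
      rw [this, Fin.card_Iic]
    have := Finset.card_le_card h2
    omega

lemma aux_unique (x : Fin (M+1) → ℝ) (r : ℕ) {v w : ℝ}
    (hv : aCnt x v ≤ r ∧ r < aCnt x v + eCnt x v)
    (hw : aCnt x w ≤ r ∧ r < aCnt x w + eCnt x w) : v = w := by
  rcases lt_trichotomy v w with h | h | h
  · exfalso
    have key : leCnt x v ≤ aCnt x w := by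
      apply Finset.card_le_card
      intro i hi
      simp only [mem_filter, mem_univ, true_and] at hi ⊢
      exact lt_of_le_of_lt hi h
    rw [← aCnt_add_eCnt] at key
    omega
  · exact h
  · exfalso
    have key : leCnt x w ≤ aCnt x v := by
      apply Finset.card_le_card
      intro i hi
      simp only [mem_filter, mem_univ, true_and] at hi ⊢
      exact lt_of_le_of_lt hi h
    rw [← aCnt_add_eCnt] at key
    omega

lemma key_sum (x : Fin (M+1) → ℝ) (r : ℕ) (hr : r ≤ M) :
    ∑ j : Fin (M+1), (if aCnt x (x j) ≤ r ∧ r < aCnt x (x j) + eCnt x (x j)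
      then ((eCnt x (x j) : ℝ≥0∞))⁻¹ else 0) = 1 := by
  classical
  have hsum := Finset.sum_comp
    (fun v : ℝ => if aCnt x v ≤ r ∧ r < aCnt x v + eCnt x v then ((eCnt x v : ℝ≥0∞))⁻¹ else 0) x
    (s := Finset.univ)
  rw [hsum]
  have hfib : ∀ v ∈ Finset.univ.image x, #(Finset.univ.filter (fun a => x a = v)) = eCnt x v := by
    intro v _; rfl
  have step : ∀ v ∈ Finset.univ.image x,
      #(Finset.univ.filter (fun a => x a = v)) •
        (if aCnt x v ≤ r ∧ r < aCnt x v + eCnt x v then ((eCnt x v : ℝ≥0∞))⁻¹ else 0)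
      = (if aCnt x v ≤ r ∧ r < aCnt x v + eCnt x v then 1 else 0) := by
    intro v hv
    rw [hfib v hv]
    have hne : eCnt x v ≠ 0 := by
      obtain ⟨j, _, rfl⟩ := Finset.mem_image.mp hv
      rw [eCnt]
      exact Finset.card_ne_zero_of_mem (by simp : j ∈ Finset.univ.filter (fun i => x i = x j))
    split
    · rw [nsmul_eq_mul, ENNReal.mul_inv_cancel (by exact_mod_cast hne) (by simp)]
    · simp
  rw [Finset.sum_congr rfl step, ← Finset.sum_filter]
  obtain ⟨j, hj1, hj2⟩ := aux_exists x r hr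
  have hsing : (Finset.univ.image x).filter
      (fun v => aCnt x v ≤ r ∧ r < aCnt x v + eCnt x v) = {x j} := by
    apply Finset.eq_singleton_iff_unique_mem.mpr
    constructor
    · exact Finset.mem_filter.mpr ⟨Finset.mem_image_of_mem x (Finset.mem_univ j), hj1, hj2⟩
    · intro v hv
      exact aux_unique x r (Finset.mem_filter.mp hv).2 ⟨hj1, hj2⟩
  rw [hsing, Finset.sum_singleton]

noncomputable def Nf (x : Fin (M+1) → ℝ) : ℕ :=
  #(Finset.univ.filter (fun i : Fin M => x i.castSucc < x (Fin.last M)))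
noncomputable def Tf (x : Fin (M+1) → ℝ) : ℕ :=
  #(Finset.univ.filter (fun i : Fin M => x i.castSucc = x (Fin.last M)))

noncomputable def G (r : ℕ) (x : Fin (M+1) → ℝ) : ℝ≥0∞ :=
  if Nf x ≤ r ∧ r ≤ Nf x + Tf x then ((Tf x : ℝ≥0∞) + 1)⁻¹ else 0

lemma Nf_comp_swap (x : Fin (M+1) → ℝ) (j : Fin (M+1)) :
    Nf (x ∘ (Equiv.swap j (Fin.last M))) = aCnt x (x j) := by
  set σ := Equiv.swap j (Fin.last M) with hσdef
  have hσlast : σ (Fin.last M) = j := Equiv.swap_apply_right _ _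
  rw [Nf]
  rw [card_filter_castSucc (fun i : Fin (M+1) => (x ∘ σ) i < (x ∘ σ) (Fin.last M))]
  have step1 : #(Finset.univ.filter (fun i : Fin (M+1) => (x ∘ σ) i < (x ∘ σ) (Fin.last M) ∧ i ≠ Fin.last M))
      = #(Finset.univ.filter (fun i : Fin (M+1) => x i < x j ∧ i ≠ j)) := by
    have := card_filter_comp_perm σ (fun i : Fin (M+1) => x i < x j ∧ i ≠ j)
    rw [← this]
    congr 1
    apply Finset.filter_congr
    intro i _
    simp only [Function.comp_apply, hσlast]
    constructor
    · rintro ⟨h1, h2⟩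
      refine ⟨h1, fun hc => h2 ?_⟩
      have : σ i = σ (Fin.last M) := by rw [hσlast, hc]
      exact σ.injective this
    · rintro ⟨h1, h2⟩
      refine ⟨h1, fun hc => h2 ?_⟩
      rw [hc, hσlast]
  rw [step1, aCnt]
  congr 1
  apply Finset.filter_congr
  intro i _
  constructor
  · exact fun h => h.1
  · intro h
    exact ⟨h, fun hc => absurd (hc ▸ h) (lt_irrefl _)⟩

lemma Tf_comp_swap (x : Fin (M+1) → ℝ) (j : Fin (M+1)) :
    Tf (x ∘ (Equiv.swap j (Fin.last M))) + 1 = eCnt x (x j) := by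
  set σ := Equiv.swap j (Fin.last M) with hσdef
  have hσlast : σ (Fin.last M) = j := Equiv.swap_apply_right _ _
  rw [Tf]
  rw [card_filter_castSucc (fun i : Fin (M+1) => (x ∘ σ) i = (x ∘ σ) (Fin.last M))]
  have step1 : #(Finset.univ.filter (fun i : Fin (M+1) => (x ∘ σ) i = (x ∘ σ) (Fin.last M) ∧ i ≠ Fin.last M))
      = #(Finset.univ.filter (fun i : Fin (M+1) => x i = x j ∧ i ≠ j)) := by
    have := card_filter_comp_perm σ (fun i : Fin (M+1) => x i = x j ∧ i ≠ j)
    rw [← this]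
    congr 1
    apply Finset.filter_congr
    intro i _
    simp only [Function.comp_apply, hσlast]
    constructor
    · rintro ⟨h1, h2⟩
      refine ⟨h1, fun hc => h2 ?_⟩
      exact σ.injective (by rw [hσlast, hc])
    · rintro ⟨h1, h2⟩
      exact ⟨h1, fun hc => h2 (by rw [hc, hσlast])⟩
  rw [step1, eCnt]
  have split : Finset.univ.filter (fun i : Fin (M+1) => x i = x j)
      = insert j (Finset.univ.filter (fun i : Fin (M+1) => x i = x j ∧ i ≠ j)) := by
    ext i
    simp only [Finset.mem_insert, Finset.mem_filter, Finset.mem_univ, true_and]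
    constructor
    · intro h
      by_cases hij : i = j
      · exact Or.inl hij
      · exact Or.inr ⟨h, hij⟩
    · rintro (rfl | ⟨h, _⟩)
      · rfl
      · exact h
  rw [split, Finset.card_insert_of_notMem (by simp)]

lemma sum_G_swap (x : Fin (M+1) → ℝ) (r : ℕ) (hr : r ≤ M) :
    ∑ j : Fin (M+1), G r (x ∘ (Equiv.swap j (Fin.last M))) = 1 := by
  have heq : ∀ j : Fin (M+1), G r (x ∘ (Equiv.swap j (Fin.last M)))
      = (if aCnt x (x j) ≤ r ∧ r < aCnt x (x j) + eCnt x (x j)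
          then ((eCnt x (x j) : ℝ≥0∞))⁻¹ else 0) := by
    intro j
    have hN := Nf_comp_swap x j
    have hT := Tf_comp_swap x j
    rw [G, hN]
    have hcond : (aCnt x (x j) ≤ r ∧ r ≤ aCnt x (x j) + Tf (x ∘ (Equiv.swap j (Fin.last M))))
        ↔ (aCnt x (x j) ≤ r ∧ r < aCnt x (x j) + eCnt x (x j)) := by
      constructor <;> (rintro ⟨h1, h2⟩; exact ⟨h1, by omega⟩)
    have hval : ((Tf (x ∘ (Equiv.swap j (Fin.last M))) : ℝ≥0∞) + 1) = (eCnt x (x j) : ℝ≥0∞) := by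
      rw [← hT]; push_cast; ring
    rw [hval]
    exact if_congr hcond rfl rfl
  rw [Finset.sum_congr rfl (fun j _ => heq j)]
  exact key_sum x r hr
lemma measurable_Nf : Measurable (Nf : (Fin (M+1) → ℝ) → ℕ) := by
  have : (Nf : (Fin (M+1) → ℝ) → ℕ)
      = fun x => ∑ i : Fin M, if x i.castSucc < x (Fin.last M) then 1 else 0 := by
    funext x
    rw [Nf, Finset.card_filter]
  rw [this]
  apply Finset.measurable_sum
  intro i _
  exact Measurable.ite (measurableSet_lt (measurable_pi_apply _) (measurable_pi_apply _))
    measurable_const measurable_const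

lemma measurable_Tf : Measurable (Tf : (Fin (M+1) → ℝ) → ℕ) := by
  have : (Tf : (Fin (M+1) → ℝ) → ℕ)
      = fun x => ∑ i : Fin M, if x i.castSucc = x (Fin.last M) then 1 else 0 := by
    funext x
    rw [Tf, Finset.card_filter]
  rw [this]
  apply Finset.measurable_sum
  intro i _
  exact Measurable.ite (measurableSet_eq_fun (measurable_pi_apply _) (measurable_pi_apply _))
    measurable_const measurable_const

lemma measurable_G (r : ℕ) : Measurable (G r : (Fin (M+1) → ℝ) → ℝ≥0∞) := by
  apply Measurable.ite
  · have h1 : MeasurableSet {x : Fin (M+1) → ℝ | Nf x ≤ r} :=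
      measurable_Nf (MeasurableSpace.measurableSet_top (s := {n : ℕ | n ≤ r}))
    have h2 : MeasurableSet {x : Fin (M+1) → ℝ | r ≤ Nf x + Tf x} :=
      (measurable_Nf.add measurable_Tf)
        (MeasurableSpace.measurableSet_top (s := {n : ℕ | r ≤ n}))
    exact h1.inter h2
  · exact (measurable_from_top (f := fun n : ℕ => ((n : ℝ≥0∞) + 1)⁻¹)).comp measurable_Tf
  · exact measurable_const

end Stmt14Aux

open Stmt14Aux

/-- Tie-broken rank uniformity: let `X 0, ..., X M` be exchangeable real random
variables (ties allowed), `N = #{i < M : X i < X M}`,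
`ties = #{i < M : X i = X M}`, and let `U` be, conditionally on the values
`(X 0, ..., X M)`, uniform on `{0,...,ties}`. Then `N + U` is uniform on
`{0,...,M}`. -/
theorem stmt_14 {Ω : Type*} [MeasurableSpace Ω] (μ : Measure Ω) [IsProbabilityMeasure μ]
    (M : ℕ) (hM : 0 < M) (X : Fin (M + 1) → Ω → ℝ) (U : Ω → ℕ)
    (hmeas : ∀ i, Measurable (X i)) (hU : Measurable U)
    (hexch : ∀ σ : Equiv.Perm (Fin (M + 1)),
      Measure.map (fun ω => fun i => X (σ i) ω) μ = Measure.map (fun ω => fun i => X i ω) μ)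
    -- `U` is uniform on `{0, ..., ties}` conditionally on the values `(X i)_i`:
    (hUcond : ∀ (k : ℕ) (A : Set (Fin (M + 1) → ℝ)), MeasurableSet A →
      μ ({ω | U ω = k} ∩ {ω | (fun i => X i ω) ∈ A})
        = ∫⁻ ω in {ω | (fun i => X i ω) ∈ A},
            (if k ≤ (Finset.univ.filter
                (fun i : Fin M => X i.castSucc ω = X (Fin.last M) ω)).card
              then (((Finset.univ.filter
                (fun i : Fin M => X i.castSucc ω = X (Fin.last M) ω)).card : ℝ≥0∞) + 1)⁻¹
              else 0) ∂μ) :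
    ∀ r : ℕ, r ≤ M →
      μ {ω | (Finset.univ.filter
            (fun i : Fin M => X i.castSucc ω < X (Fin.last M) ω)).card + U ω = r}
        = 1 / (M + 1) := by
  intro r hr
  classical
  set val : Ω → (Fin (M+1) → ℝ) := fun ω i => X i ω with hval_def
  have hval : Measurable val := measurable_pi_lambda _ hmeas
  -- the integrand appearing in hUcond, in terms of Tf
  set g : ℕ → Ω → ℝ≥0∞ := fun k ω =>
    (if k ≤ Tf (val ω) then ((Tf (val ω) : ℝ≥0∞) + 1)⁻¹ else 0) with hg_def
  have hgmeas : ∀ k, Measurable (g k) := by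
    intro k
    apply Measurable.ite
    · exact (measurable_Tf.comp hval)
        (MeasurableSpace.measurableSet_top (s := {n : ℕ | k ≤ n}))
    · exact (measurable_from_top (f := fun n : ℕ => ((n : ℝ≥0∞) + 1)⁻¹)).comp
        (measurable_Tf.comp hval)
    · exact measurable_const
  -- measurable sets A_k
  set A : ℕ → Set (Fin (M+1) → ℝ) := fun k => {x | Nf x = r - k} with hA_def
  have hA : ∀ k, MeasurableSet (A k) :=
    fun k => measurable_Nf (MeasurableSpace.measurableSet_top (s := {n : ℕ | n = r - k}))
  -- Step 1: decompose the event
  have hset : {ω | Nf (val ω) + U ω = r}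
      = ⋃ k ∈ Finset.range (r+1), ({ω | U ω = k} ∩ val ⁻¹' A k) := by
    ext ω
    constructor
    · intro h
      have h' : Nf (val ω) + U ω = r := h
      refine Set.mem_biUnion (Finset.mem_range.mpr (by omega : U ω < r + 1)) ?_
      exact ⟨rfl, (by omega : Nf (val ω) = r - U ω)⟩
    · intro h
      obtain ⟨k, hk, h1, h2⟩ := Set.mem_iUnion₂.mp h
      have hk' : k < r + 1 := Finset.mem_range.mp hk
      have h1' : U ω = k := h1
      have h2' : Nf (val ω) = r - k := h2
      show Nf (val ω) + U ω = r
      omega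
  have hgoal_eq : {ω | (Finset.univ.filter
      (fun i : Fin M => X i.castSucc ω < X (Fin.last M) ω)).card + U ω = r}
      = {ω | Nf (val ω) + U ω = r} := rfl
  rw [hgoal_eq, hset]
  -- Step 2: measure of disjoint union
  have hdisj : (↑(Finset.range (r+1)) : Set ℕ).PairwiseDisjoint
      (fun k => ({ω | U ω = k} ∩ val ⁻¹' A k)) := by
    intro a _ b _ hab
    apply Set.disjoint_left.mpr
    rintro ω ⟨ha, _⟩ ⟨hb, _⟩
    exact hab (ha.symm.trans hb)
  have hmeasSets : ∀ k ∈ Finset.range (r+1),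
      MeasurableSet ({ω | U ω = k} ∩ val ⁻¹' A k) := by
    intro k _
    exact (hU (MeasurableSpace.measurableSet_top (s := {k}))).inter (hval (hA k))
  rw [measure_biUnion_finset hdisj hmeasSets]
  -- Step 3: apply hUcond and rewrite as lintegrals of indicators
  have hterm : ∀ k ∈ Finset.range (r+1),
      μ ({ω | U ω = k} ∩ val ⁻¹' A k)
        = ∫⁻ ω, (val ⁻¹' A k).indicator (g k) ω ∂μ := by
    intro k _
    have h1 : μ ({ω | U ω = k} ∩ val ⁻¹' A k)
        = ∫⁻ ω in val ⁻¹' A k, g k ω ∂μ := hUcond k (A k) (hA k)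
    have h2 := lintegral_indicator (μ := μ) (hval (hA k)) (g k)
    exact h1.trans h2.symm
  rw [Finset.sum_congr rfl hterm]
  rw [← lintegral_finset_sum (Finset.range (r+1))
    (f := fun k => (val ⁻¹' A k).indicator (g k))
    (fun k _ => ((hgmeas k).indicator (hval (hA k))))]
  -- Step 4: pointwise identity with G
  have hpt : ∀ ω, (∑ k ∈ Finset.range (r+1),
      (val ⁻¹' A k).indicator (g k) ω) = G r (val ω) := by
    intro ω
    set n := Nf (val ω) with hn
    set t := Tf (val ω) with ht
    have hind : ∀ k, (val ⁻¹' A k).indicator (g k) ω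
        = if n = r - k then (if k ≤ t then ((t : ℝ≥0∞) + 1)⁻¹ else 0) else 0 := by
      intro k
      rw [Set.indicator_apply]
      simp only [Set.mem_preimage, hA_def, Set.mem_setOf_eq]
      exact if_congr Iff.rfl rfl rfl
    rw [Finset.sum_congr rfl (fun k _ => hind k), G, ← hn, ← ht]
    by_cases h1 : n ≤ r
    · rw [Finset.sum_eq_single_of_mem (r - n) (Finset.mem_range.mpr (by omega))]
      · by_cases h2 : r - n ≤ t
        · rw [if_pos (by omega : n = r - (r - n)), if_pos h2, if_pos ⟨h1, by omega⟩]
        · rw [if_pos (by omega : n = r - (r - n)), if_neg h2, if_neg (by omega)]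
      · intro k hk hkne
        rw [if_neg (by rw [Finset.mem_range] at hk; omega)]
    · rw [Finset.sum_eq_zero, if_neg (by omega)]
      intro k hk
      rw [Finset.mem_range] at hk
      rw [if_neg (by omega)]
  simp only [hpt]
  -- Step 5: move to the pushforward measure
  set ν : Measure (Fin (M+1) → ℝ) := Measure.map val μ with hν_def
  have hGν : ∫⁻ ω, G r (val ω) ∂μ = ∫⁻ x, G r x ∂ν := (lintegral_map (measurable_G r) hval).symm
  rw [hGν]
  -- Step 6: invariance under coordinate permutations
  have hinv : ∀ σ : Equiv.Perm (Fin (M+1)),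
      ∫⁻ x, G r (x ∘ σ) ∂ν = ∫⁻ x, G r x ∂ν := by
    intro σ
    have hre : Measurable (fun x : Fin (M+1) → ℝ => x ∘ σ) :=
      measurable_pi_lambda _ (fun i => measurable_pi_apply (σ i))
    have hmap : Measure.map (fun x : Fin (M+1) → ℝ => x ∘ σ) ν = ν := by
      rw [hν_def, Measure.map_map hre hval]
      exact hexch σ
    conv_rhs => rw [← hmap]
    rw [lintegral_map (measurable_G r) hre]
  -- Step 7: sum over the swaps
  have hsum : ∑ j : Fin (M+1), ∫⁻ x, G r (x ∘ (Equiv.swap j (Fin.last M))) ∂ν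
      = (M + 1) * ∫⁻ x, G r x ∂ν := by
    rw [Finset.sum_congr rfl (fun j _ => hinv (Equiv.swap j (Fin.last M)))]
    rw [Finset.sum_const, Finset.card_univ, Fintype.card_fin, nsmul_eq_mul]
    push_cast
    ring
  have hν_prob : IsProbabilityMeasure ν := Measure.isProbabilityMeasure_map hval.aemeasurable
  have hsum2 : ∑ j : Fin (M+1), ∫⁻ x, G r (x ∘ (Equiv.swap j (Fin.last M))) ∂ν = 1 := by
    rw [← lintegral_finset_sum (Finset.univ : Finset (Fin (M+1)))
      (f := fun j => fun x : Fin (M+1) → ℝ => G r (x ∘ (Equiv.swap j (Fin.last M))))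
      (fun j _ => (measurable_G r).comp
        (measurable_pi_lambda _ (fun i => measurable_pi_apply _)))]
    have : ∀ x, (∑ j : Fin (M+1), G r (x ∘ (Equiv.swap j (Fin.last M)))) = 1 :=
      fun x => sum_G_swap x r hr
    simp only [this]
    simp
  have hkey : ((M : ℝ≥0∞) + 1) * ∫⁻ x, G r x ∂ν = 1 := by
    rw [← hsum, hsum2]
  have hM0 : ((M : ℝ≥0∞) + 1) ≠ 0 := by simp
  have hMtop : ((M : ℝ≥0∞) + 1) ≠ ⊤ := by simp [ENNReal.add_ne_top]
  calc ∫⁻ x, G r x ∂ν = ((M : ℝ≥0∞) + 1)⁻¹ * (((M : ℝ≥0∞) + 1) * ∫⁻ x, G r x ∂ν) := by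
        rw [← mul_assoc, ENNReal.inv_mul_cancel hM0 hMtop, one_mul]
    _ = ((M : ℝ≥0∞) + 1)⁻¹ := by rw [hkey, mul_one]
    _ = 1 / ((M : ℝ≥0∞) + 1) := by rw [one_div]
end
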